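/- Assume the following two hypotheses: (i) for all u, w ∈ (0,1/2], κ(u,w) ≤ κ(1−u,w); (ii) the function (a,b) ↦ κ(H₂⁻¹(a), H₂⁻¹(b)) is jointly convex on (0,1]². Then for all m_u, m_w ∈ (0,1), e_u ∈ (0, H₂(m_u)], and e_w ∈ (0, H₂(m_w)], one has ζ(m_u, m_w, e_u, e_w) ≥ φ((1 − |H₂⁻¹(e_u) − H₂⁻¹(e_w)|)/2, (e_u + e_w)/2) + (H₂⁻¹(e_u) − H₂⁻¹(e_w))·(J(H₂⁻¹(e_w)) − J(H₂⁻¹(e_u)))/2 − φ((1 − |m_u − m_w|)/2, (e_u + e_w)/2). -/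

import Mathlib

/-- Binary entropy function. -/
noncomputable def H2 (x : ℝ) : ℝ := -x * Real.logb 2 x - (1 - x) * Real.logb 2 (1 - x)

/-- `J`, the derivative of the binary entropy function. -/
noncomputable def J (x : ℝ) : ℝ := Real.logb 2 ((1 - x) / x)

/-- The set of values `(1/2)·E[(u−w)(J(w)−J(u))]` achieved by finite probability
spaces `(X, p)` and functions `u, w : X → (0,1)` meeting the four moment
constraints. -/
def zetaSet (mu mw eu ew : ℝ) : Set ℝ :=
  {c | ∃ (X : Type) (_ : Fintype X) (p u w : X → ℝ),
    (∀ x, 0 ≤ p x) ∧ (∑ x, p x) = 1 ∧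
    (∀ x, u x ∈ Set.Ioo (0 : ℝ) 1) ∧ (∀ x, w x ∈ Set.Ioo (0 : ℝ) 1) ∧
    (∑ x, p x * u x) = mu ∧ (∑ x, p x * w x) = mw ∧
    (∑ x, p x * H2 (u x)) = eu ∧ (∑ x, p x * H2 (w x)) = ew ∧
    c = (1 / 2) * ∑ x, p x * ((u x - w x) * (J (w x) - J (u x)))}

/-- `ζ(m_u, m_w, e_u, e_w)`, the infimum over the constraint set. -/
noncomputable def zeta (mu mw eu ew : ℝ) : ℝ := sInf (zetaSet mu mw eu ew)

/-- `H₂⁻¹ : [0,1] → [0,1/2]`, the inverse of the binary entropy on `[0,1/2]`. -/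
noncomputable def H2inv : ℝ → ℝ := Function.invFunOn H2 (Set.Icc 0 (1 / 2))

/-- `η(x) = (1 − 2·H₂⁻¹(x))·J(H₂⁻¹(x))`. -/
noncomputable def eta (x : ℝ) : ℝ := (1 - 2 * H2inv x) * J (H2inv x)

/-- The parameter `r ∈ (0,1]` used in the definition of `φ`: `r = 1` when `x = 1/2`,
and otherwise `r ∈ (0,1)` is the (unique) solution of
`r/(1 − 2·H₂⁻¹(r)) = y/|1 − 2x|`. -/
noncomputable def rPhi (x y : ℝ) : ℝ :=
  if x = 1 / 2 then 1
  else Function.invFunOn (fun r => r / (1 - 2 * H2inv r)) (Set.Ioo 0 1) (y / |1 - 2 * x|)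

/-- The function `φ`. -/
noncomputable def phi (x y : ℝ) : ℝ :=
  if H2 x ≤ y then 0 else eta y - (y / rPhi x y) * eta (rPhi x y)

/-- `L(u) = 2·H₂(u)/(1 − 2u)` for `u ∈ [0,1/2)` (with `L(0) = 0`). -/
noncomputable def L (u : ℝ) : ℝ := 2 * H2 u / (1 - 2 * u)

/-- `L⁻¹ : [0,∞) → [0,1/2)`, the inverse of `L`. -/
noncomputable def Linv : ℝ → ℝ := Function.invFunOn L (Set.Ico 0 (1 / 2))

/-- The function `κ`. -/
noncomputable def kappa (u w : ℝ) : ℝ :=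
  if u = w then 0
  else (u - w) * (J w - J u) / 2 - |u - w| * J (Linv ((H2 u + H2 w) / |u - w|))


open Real Set

lemma log2_pos : (0:ℝ) < Real.log 2 := Real.log_pos (by norm_num)

lemma H2_eq (x : ℝ) : H2 x = Real.binEntropy x / Real.log 2 := by
  rw [H2, Real.binEntropy, Real.logb, Real.logb, Real.log_inv, Real.log_inv]
  ring

lemma J_eq {x : ℝ} (hx : x ∈ Ioo (0:ℝ) 1) : J x = (Real.log (1 - x) - Real.log x) / Real.log 2 := by
  rw [J, Real.logb, Real.log_div (by linarith [hx.2]) (by linarith [hx.1])]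

lemma H2_zero : H2 0 = 0 := by simp [H2]
lemma H2_half : H2 (1/2) = 1 := by
  rw [H2_eq]
  rw [show (1:ℝ)/2 = 2⁻¹ by norm_num, Real.binEntropy_two_inv]
  exact div_self (ne_of_gt log2_pos)
lemma H2_symm (x : ℝ) : H2 (1 - x) = H2 x := by
  rw [H2_eq, H2_eq, Real.binEntropy_one_sub]
lemma H2_pos {x : ℝ} (hx : x ∈ Ioo (0:ℝ) 1) : 0 < H2 x := by
  rw [H2_eq]; exact div_pos (Real.binEntropy_pos hx.1 hx.2) log2_pos
lemma H2_le_one (x : ℝ) : H2 x ≤ 1 := by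
  rw [H2_eq]
  rw [div_le_one log2_pos]
  exact Real.binEntropy_le_log_two
lemma H2_strictMonoOn : StrictMonoOn H2 (Icc 0 (1/2)) := by
  have : (1:ℝ)/2 = 2⁻¹ := by norm_num
  intro a ha b hb hab
  rw [H2_eq, H2_eq, div_lt_div_iff_of_pos_right log2_pos]
  exact Real.binEntropy_strictMonoOn (by rw [← this]; exact ha) (by rw [← this]; exact hb) hab
lemma H2_continuous : Continuous H2 := by
  have : H2 = fun x => Real.binEntropy x / Real.log 2 := funext H2_eq
  rw [this]
  exact Real.binEntropy_continuous.div_const _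
lemma H2_concaveOn : ConcaveOn ℝ (Icc 0 1) H2 := by
  have : H2 = fun x => (Real.log 2)⁻¹ • Real.binEntropy x := by
    funext x; rw [H2_eq]; simp [smul_eq_mul, div_eq_inv_mul]
  rw [this]
  exact (Real.strictConcave_binEntropy.concaveOn).smul (by positivity)
lemma J_zero : J 0 = 0 := by simp [J]
lemma J_half : J (1/2) = 0 := by norm_num [J]
lemma J_one_sub {x : ℝ} (hx : x ∈ Ioo (0:ℝ) 1) : J (1 - x) = - J x := by
  rw [J, J]
  have h1 : (1 - (1-x))/(1-x) = ((1-x)/x)⁻¹ := by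
    field_simp
    ring
  rw [h1, Real.logb_inv]
lemma J_pos {x : ℝ} (h0 : 0 < x) (h1 : x < 1/2) : 0 < J x := by
  rw [J]
  apply Real.logb_pos (by norm_num)
  rw [lt_div_iff₀ h0]; linarith
lemma J_nonneg {x : ℝ} (h0 : 0 ≤ x) (h1 : x ≤ 1/2) : 0 ≤ J x := by
  rcases eq_or_lt_of_le h0 with h|h
  · simp [← h, J]
  rcases eq_or_lt_of_le h1 with h'|h'
  · rw [h']; rw [show J (1/2) = 0 by norm_num [J]]
  · exact le_of_lt (J_pos h h')
lemma J_strictAntiOn : StrictAntiOn J (Ioo 0 1) := by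
  intro a ha b hb hab
  rw [J, J]
  apply Real.logb_lt_logb (by norm_num)
  · apply div_pos (by linarith [hb.2]) hb.1
  · rw [div_lt_div_iff₀ hb.1 ha.1]
    nlinarith [ha.1, hb.2]
lemma hasDerivAt_H2 {x : ℝ} (hx : x ∈ Ioo (0:ℝ) 1) : HasDerivAt H2 (J x) x := by
  have h := Real.hasDerivAt_binEntropy (ne_of_gt hx.1) (ne_of_lt hx.2)
  have h2 := h.div_const (Real.log 2)
  have : H2 = fun x => Real.binEntropy x / Real.log 2 := funext H2_eq
  rw [this, J_eq hx]
  exact h2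
lemma hasDerivAt_J {x : ℝ} (hx : x ∈ Ioo (0:ℝ) 1) :
    HasDerivAt J (-(1 / (x * (1 - x) * Real.log 2))) x := by
  have hx0 := hx.1; have hx1 := hx.2
  have h1 : HasDerivAt (fun y : ℝ => Real.log (1 - y)) (-(1/(1-x))) x := by
    have := ((Real.hasDerivAt_log (by linarith : (1:ℝ) - x ≠ 0)).comp x
      (((hasDerivAt_id x).const_sub 1)))
    simpa [div_eq_mul_inv, Function.comp_def] using this
  have h2 : HasDerivAt (fun y : ℝ => Real.log y) (1/x) x := by
    simpa [one_div] using Real.hasDerivAt_log (ne_of_gt hx0)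
  have h3 := ((h1.sub h2).div_const (Real.log 2))
  have hJ : ∀ᶠ y in nhds x, J y = (Real.log (1 - y) - Real.log y) / Real.log 2 := by
    filter_upwards [Ioo_mem_nhds hx0 hx1] with y hy using J_eq hy
  have h4 : HasDerivAt J ((-(1/(1-x)) - 1/x)/Real.log 2) x := h3.congr_of_eventuallyEq (hJ.mono fun y hy => hy)
  convert h4 using 1
  have hl := ne_of_gt log2_pos
  have h1x : (1:ℝ) - x ≠ 0 := by linarith
  have hx' : x ≠ 0 := ne_of_gt hx0
  field_simp
  ring

/-! ### H2inv -/

lemma H2_surj {e : ℝ} (he : e ∈ Icc (0:ℝ) 1) : ∃ x ∈ Icc (0:ℝ) (1/2), H2 x = e := by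
  have h := intermediate_value_Icc (by norm_num : (0:ℝ) ≤ 1/2) (H2_continuous.continuousOn)
  rw [H2_zero, H2_half] at h
  exact h he

lemma H2inv_spec {e : ℝ} (he : e ∈ Icc (0:ℝ) 1) :
    H2inv e ∈ Icc (0:ℝ) (1/2) ∧ H2 (H2inv e) = e := by
  obtain ⟨x, hx, hxe⟩ := H2_surj he
  exact ⟨Function.invFunOn_mem ⟨x, hx, hxe⟩, Function.invFunOn_eq ⟨x, hx, hxe⟩⟩

lemma H2inv_H2 {x : ℝ} (hx : x ∈ Icc (0:ℝ) (1/2)) : H2inv (H2 x) = x :=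
  H2_strictMonoOn.injOn.leftInvOn_invFunOn hx

lemma H2inv_pos {e : ℝ} (he : e ∈ Ioc (0:ℝ) 1) : 0 < H2inv e := by
  obtain ⟨hmem, heq⟩ := H2inv_spec ⟨le_of_lt he.1, he.2⟩
  rcases eq_or_lt_of_le hmem.1 with h|h
  · exfalso; rw [← h, H2_zero] at heq; exact absurd heq.symm (ne_of_gt he.1)
  · exact h

lemma H2inv_le {e e' : ℝ} (he : e ∈ Icc (0:ℝ) 1) (he' : e' ∈ Icc (0:ℝ) 1) (h : e ≤ e') :
    H2inv e ≤ H2inv e' := by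
  obtain ⟨hm, hq⟩ := H2inv_spec he
  obtain ⟨hm', hq'⟩ := H2inv_spec he'
  by_contra hc
  push_neg at hc
  have := H2_strictMonoOn hm' hm hc
  rw [hq, hq'] at this
  linarith

lemma H2inv_one : H2inv 1 = 1/2 := by
  have := H2inv_H2 (x := 1/2) ⟨by norm_num, le_refl _⟩
  rwa [H2_half] at this

/-! ### L and Linv -/

noncomputable def D2 (h : ℝ) : ℝ := 2 * J h * (1 - 2*h) + 4 * H2 h

lemma L_zero : L 0 = 0 := by simp [L, H2_zero]

lemma key_ineq {h : ℝ} (h0 : 0 < h) (h1 : h ≤ 1/2) :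
    (1 - 2*h)^2 / Real.log 2 ≤ (1 - 2*h) * J h + 2 * H2 h := by
  have hh1 : h < 1 := by linarith
  have hH : 0 ≤ H2 h := le_of_lt (H2_pos ⟨h0, hh1⟩)
  have hJ : (1 - 2*h) / Real.log 2 ≤ J h := by
    rw [J_eq ⟨h0, hh1⟩, div_le_div_iff_of_pos_right log2_pos]
    have hlog : Real.log (h / (1-h)) ≤ h/(1-h) - 1 :=
      Real.log_le_sub_one_of_pos (div_pos h0 (by linarith))
    have hld : Real.log (h / (1-h)) = Real.log h - Real.log (1-h) :=
      Real.log_div (ne_of_gt h0) (by linarith)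
    rw [hld] at hlog
    have hne1h : (1:ℝ) - h ≠ 0 := by linarith
    have h2 : h/(1-h) - 1 = -((1-2*h)/(1-h)) := by field_simp; ring
    rw [h2] at hlog
    have h3 : (1-2*h)/(1-h) ≤ Real.log (1-h) - Real.log h := by linarith
    have h4 : 1 - 2*h ≤ (1-2*h)/(1-h) := by
      rw [le_div_iff₀ (by linarith)]
      nlinarith
    linarith
  have h5 : (1-2*h) * ((1 - 2*h) / Real.log 2) ≤ (1-2*h) * J h := by
    apply mul_le_mul_of_nonneg_left hJ (by linarith)
  calc (1 - 2*h)^2 / Real.log 2 = (1-2*h) * ((1 - 2*h) / Real.log 2) := by ring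
  _ ≤ (1-2*h) * J h := h5
  _ ≤ (1 - 2*h) * J h + 2 * H2 h := by linarith

lemma D2_ge {h : ℝ} (h0 : 0 < h) (h1 : h ≤ 1/2) : 2 * (1 - 2*h)^2 / Real.log 2 ≤ D2 h := by
  have := key_ineq h0 h1
  rw [D2]
  have h2 : 2 * (1 - 2*h)^2 / Real.log 2 = 2 * ((1 - 2*h)^2 / Real.log 2) := by ring
  rw [h2]
  linarith

lemma D2_pos {h : ℝ} (h0 : 0 < h) (h1 : h < 1/2) : 0 < D2 h := by
  have hH := H2_pos ⟨h0, by linarith⟩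
  have hJ := J_pos h0 h1
  rw [D2]
  nlinarith

lemma hasDerivAt_L {h : ℝ} (h0 : 0 < h) (h1 : h < 1/2) : HasDerivAt L (D2 h / (1 - 2*h)^2) h := by
  have hne : (1:ℝ) - 2*h ≠ 0 := by linarith
  have hnum : HasDerivAt (fun u => 2 * H2 u) (2 * J h) h :=
    (hasDerivAt_H2 ⟨h0, by linarith⟩).const_mul 2
  have hden : HasDerivAt (fun u : ℝ => 1 - 2*u) (-2) h := by
    simpa using ((hasDerivAt_id h).const_mul 2).const_sub 1
  have := hnum.fun_div hden hne
  refine this.congr_deriv ?_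
  rw [D2]
  field_simp
  ring

lemma L_continuousOn : ContinuousOn L (Ico 0 (1/2)) := by
  apply ContinuousOn.div ((continuous_const.mul H2_continuous).continuousOn)
    (Continuous.continuousOn (by continuity))
  intro x hx
  have := hx.2
  simp only [mem_Ico] at hx
  intro hc
  linarith [hx.2]

lemma L_strictMonoOn : StrictMonoOn L (Ico 0 (1/2)) := by
  apply strictMonoOn_of_deriv_pos (convex_Ico 0 (1/2)) L_continuousOn
  intro x hx
  rw [interior_Ico] at hx
  rw [HasDerivAt.deriv (hasDerivAt_L hx.1 hx.2)]
  exact div_pos (D2_pos hx.1 hx.2) (by nlinarith [hx.2])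

lemma L_nonneg {h : ℝ} (hh : h ∈ Ico (0:ℝ) (1/2)) : 0 ≤ L h := by
  rcases eq_or_lt_of_le hh.1 with h0|h0
  · rw [← h0, L_zero]
  · apply le_of_lt
    apply div_pos
    · exact mul_pos (by norm_num) (H2_pos ⟨h0, by linarith [hh.2]⟩)
    · linarith [hh.2]

lemma L_surj {t : ℝ} (ht : 0 ≤ t) : ∃ h ∈ Ico (0:ℝ) (1/2), L h = t := by
  rcases eq_or_lt_of_le ht with h0|h0
  · exact ⟨0, ⟨le_refl _, by norm_num⟩, by rw [L_zero, h0]⟩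
  have hc : 0 < H2 (1/4) := H2_pos ⟨by norm_num, by norm_num⟩
  set c := H2 (1/4) with hcdef
  set b := max (1/4 : ℝ) (1/2 - c/t) with hbdef
  have hb14 : (1/4 : ℝ) ≤ b := le_max_left _ _
  have hblt : b < 1/2 := by
    apply max_lt (by norm_num)
    have : 0 < c/t := div_pos hc h0
    linarith
  have hbt : t ≤ L b := by
    have hH2b : c ≤ H2 b := by
      rcases eq_or_lt_of_le hb14 with h|h
      · rw [← h]
      · exact le_of_lt (H2_strictMonoOn ⟨by norm_num, by norm_num⟩
          ⟨by linarith, le_of_lt hblt⟩ h)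
    have h12b : 0 < 1 - 2*b := by linarith
    have ht' : t ≠ 0 := ne_of_gt h0
    have hub : 1 - 2*b ≤ 2*c/t := by
      rcases le_or_gt (1/2 - c/t) (1/4 : ℝ) with h|h
      · have hb4 : b = 1/4 := by rw [hbdef, max_eq_left h]
        rw [hb4]
        have h4 : (1:ℝ)/4 ≤ c/t := by linarith
        rw [le_div_iff₀ h0] at h4
        have h5 : (1:ℝ) - 2*(1/4) = 1/2 := by norm_num
        rw [h5, le_div_iff₀ h0]
        nlinarith
      · have hbeq : b = 1/2 - c/t := by rw [hbdef, max_eq_right (le_of_lt h)]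
        rw [hbeq]
        apply le_of_eq
        ring
    have h1 : t = 2*c/(2*c/t) := by field_simp
    rw [L]
    calc t = 2*c/(2*c/t) := h1
    _ ≤ 2*c/(1-2*b) := by
          apply div_le_div_of_nonneg_left (by positivity) h12b hub
    _ ≤ 2 * H2 b / (1-2*b) := by gcongr
  have hsub : Icc (0:ℝ) b ⊆ Ico (0:ℝ) (1/2) := fun x hx => ⟨hx.1, lt_of_le_of_lt hx.2 hblt⟩
  have := intermediate_value_Icc (by linarith : (0:ℝ) ≤ b) (L_continuousOn.mono hsub)
  rw [L_zero] at this
  obtain ⟨h, hh, hht⟩ := this ⟨ht, hbt⟩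
  exact ⟨h, hsub hh, hht⟩

lemma Linv_spec {t : ℝ} (ht : 0 ≤ t) : Linv t ∈ Ico (0:ℝ) (1/2) ∧ L (Linv t) = t := by
  obtain ⟨h, hh, hht⟩ := L_surj ht
  exact ⟨Function.invFunOn_mem ⟨h, hh, hht⟩, Function.invFunOn_eq ⟨h, hh, hht⟩⟩

lemma Linv_L {h : ℝ} (hh : h ∈ Ico (0:ℝ) (1/2)) : Linv (L h) = h :=
  L_strictMonoOn.injOn.leftInvOn_invFunOn hh

lemma Linv_zero : Linv 0 = 0 := by
  have := Linv_L (h := 0) ⟨le_refl _, by norm_num⟩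
  rwa [L_zero] at this

lemma Linv_pos {t : ℝ} (ht : 0 < t) : 0 < Linv t := by
  obtain ⟨hm, hq⟩ := Linv_spec (le_of_lt ht)
  rcases eq_or_lt_of_le hm.1 with h|h
  · exfalso; rw [← h, L_zero] at hq; linarith
  · exact h

lemma Linv_mono {t t' : ℝ} (ht : 0 ≤ t) (htt : t ≤ t') : Linv t ≤ Linv t' := by
  obtain ⟨hm, hq⟩ := Linv_spec ht
  obtain ⟨hm', hq'⟩ := Linv_spec (le_trans ht htt)
  by_contra hc
  push_neg at hc
  have := L_strictMonoOn hm' hm hc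
  rw [hq, hq'] at this
  linarith

/-! ### g = J ∘ Linv : monotonicity and convexity -/

noncomputable def gg (t : ℝ) : ℝ := J (Linv t)

lemma gg_nonneg {t : ℝ} (ht : 0 ≤ t) : 0 ≤ gg t := by
  obtain ⟨hm, _⟩ := Linv_spec ht
  exact J_nonneg hm.1 (le_of_lt hm.2)

lemma gg_antitoneOn : AntitoneOn gg (Ioi 0) := by
  intro t ht t' ht' htt
  rcases eq_or_lt_of_le htt with h|h
  · rw [h]
  rw [gg, gg]
  have h1 := Linv_pos (mem_Ioi.mp ht)
  have h2 := Linv_pos (lt_trans (mem_Ioi.mp ht) h)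
  obtain ⟨hm, _⟩ := Linv_spec (le_of_lt (mem_Ioi.mp ht))
  obtain ⟨hm', _⟩ := Linv_spec (le_of_lt (lt_trans (mem_Ioi.mp ht) h))
  have hmono := Linv_mono (le_of_lt (mem_Ioi.mp ht)) htt
  rcases eq_or_lt_of_le hmono with he|he
  · rw [he]
  exact le_of_lt (J_strictAntiOn ⟨h1, by linarith [hm.2]⟩ ⟨h2, by linarith [hm'.2]⟩ he)

/-- The ratio J'/L' is monotone. -/
lemma ratio_mono {x y : ℝ} (hx : x ∈ Ioo (0:ℝ) (1/2)) (hy : y ∈ Ioo (0:ℝ) (1/2)) (hxy : x ≤ y) :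
    (-(1 / (x * (1 - x) * Real.log 2))) / (D2 x / (1 - 2*x)^2) ≤
    (-(1 / (y * (1 - y) * Real.log 2))) / (D2 y / (1 - 2*y)^2) := by
  have hDx := D2_pos hx.1 hx.2
  have hDy := D2_pos hy.1 hy.2
  have h2x : (0:ℝ) < (1-2*x)^2 := by nlinarith [hx.2]
  have h2y : (0:ℝ) < (1-2*y)^2 := by nlinarith [hy.2]
  have hxx : (0:ℝ) < x * (1-x) := mul_pos hx.1 (by linarith [hx.2])
  have hyy : (0:ℝ) < y * (1-y) := mul_pos hy.1 (by linarith [hy.2])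
  rw [div_le_div_iff₀ (div_pos hDx h2x) (div_pos hDy h2y)]
  rw [neg_mul, neg_mul, neg_le_neg_iff]
  rw [div_mul_div_comm, div_mul_div_comm]
  rw [div_le_div_iff₀ (by positivity) (by positivity)]
  -- goal: (1-2y)^2 * (y(1-y) log2 * D2 x) ≤ (1-2x)^2 * (x(1-x) log2 * D2 y)
  -- i.e. R(y) ≤ R(x) where R(h) = (1-2h)^2/(h(1-h) D2 h) : antitone.
  have key : AntitoneOn (fun h : ℝ => (1-2*h)^2 / (h * (1-h) * D2 h)) (Ioo 0 (1/2)) := by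
    have hderiv : ∀ h ∈ Ioo (0:ℝ) (1/2), HasDerivAt (fun h : ℝ => (1-2*h)^2 / (h * (1-h) * D2 h))
        (-((1-2*h) * (D2 h - 2*(1-2*h)^2/Real.log 2)) / (h * (1-h) * D2 h)^2) h := by
      intro h hh
      have hD := D2_pos hh.1 hh.2
      have hh1 : h < 1 := by linarith [hh.2]
      have hhh : (0:ℝ) < h * (1-h) := mul_pos hh.1 (by linarith)
      have hJ' := hasDerivAt_J ⟨hh.1, hh1⟩
      have hH' := hasDerivAt_H2 ⟨hh.1, hh1⟩
      -- derivative of D2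
      have hD2' : HasDerivAt D2 (2 * (1-2*h) * (-(1 / (h * (1 - h) * Real.log 2)))) h := by
        have e1 : HasDerivAt (fun u : ℝ => 2 * J u * (1 - 2*u))
            (2 * (-(1 / (h * (1 - h) * Real.log 2))) * (1-2*h) + 2 * J h * (-2)) h := by
          have hlin : HasDerivAt (fun u : ℝ => 1 - 2*u) (-2) h := by
            simpa using ((hasDerivAt_id h).const_mul 2).const_sub 1
          exact ((hJ'.const_mul 2).mul hlin)
        have e2 : HasDerivAt (fun u : ℝ => 4 * H2 u) (4 * J h) h := hH'.const_mul 4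
        have := e1.add e2
        have heq : 2 * (-(1 / (h * (1 - h) * Real.log 2))) * (1-2*h) + 2 * J h * (-2) + 4 * J h
            = 2 * (1-2*h) * (-(1 / (h * (1 - h) * Real.log 2))) := by ring
        rw [heq] at this
        exact this
      -- derivative of numerator
      have hnum : HasDerivAt (fun u : ℝ => (1-2*u)^2) (2*(1-2*h)*(-2)) h := by
        have : HasDerivAt (fun u : ℝ => 1-2*u) (-2) h := by
          simpa using ((hasDerivAt_id h).const_mul 2).const_sub 1
        simpa using (this.fun_pow 2)
      -- derivative of h(1-h)
      have hden1 : HasDerivAt (fun u : ℝ => u * (1-u)) (1-2*h) h := by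
        have := (hasDerivAt_id h).fun_mul ((hasDerivAt_id h).const_sub 1)
        simp only [id_eq] at this
        refine this.congr_deriv ?_
        ring
      have hden : HasDerivAt (fun u : ℝ => u * (1-u) * D2 u)
          ((1-2*h) * D2 h + h*(1-h) * (2 * (1-2*h) * (-(1 / (h * (1 - h) * Real.log 2))))) h :=
        hden1.mul hD2'
      have hdne : h * (1-h) * D2 h ≠ 0 := ne_of_gt (by positivity)
      have := hnum.fun_div hden hdne
      refine this.congr_deriv ?_
      have hlne : Real.log 2 ≠ 0 := ne_of_gt log2_pos
      have hne1 : (1:ℝ) - h ≠ 0 := by linarith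
      have hne0 : h ≠ 0 := ne_of_gt hh.1
      field_simp
      ring
    apply antitoneOn_of_deriv_nonpos (convex_Ioo 0 (1/2))
    · exact ContinuousOn.congr (continuousOn_of_forall_continuousAt
        (fun h hh => (hderiv h hh).continuousAt)) (fun _ _ => rfl)
    · rw [interior_Ioo]
      intro h hh
      exact (hderiv h hh).differentiableAt.differentiableWithinAt
    · rw [interior_Ioo]
      intro h hh
      rw [(hderiv h hh).deriv]
      have hD := D2_pos hh.1 hh.2
      have hDge := D2_ge hh.1 (le_of_lt hh.2)
      have hhh : (0:ℝ) < h * (1-h) := mul_pos hh.1 (by linarith [hh.2])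
      apply div_nonpos_of_nonpos_of_nonneg
      · rw [neg_nonpos]
        apply mul_nonneg (by linarith [hh.2])
        linarith
      · positivity
  have := key hx hy hxy
  rw [div_le_div_iff₀ (by positivity) (by positivity)] at this
  nlinarith [this, log2_pos]

lemma slope_JL {h1 h2 : ℝ} (hh1 : h1 ∈ Ioo (0:ℝ) (1/2)) (hh2 : h2 ∈ Ioo (0:ℝ) (1/2))
    (h12 : h1 < h2) : ∃ ξ ∈ Ioo h1 h2,
    (J h2 - J h1) / (L h2 - L h1) =
      (-(1 / (ξ * (1 - ξ) * Real.log 2))) / (D2 ξ / (1 - 2*ξ)^2) := by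
  have hsub : Icc h1 h2 ⊆ Ioo (0:ℝ) (1/2) := fun x hx =>
    ⟨lt_of_lt_of_le hh1.1 hx.1, lt_of_le_of_lt hx.2 hh2.2⟩
  have hJc : ContinuousOn J (Icc h1 h2) := by
    apply continuousOn_of_forall_continuousAt
    intro x hx
    exact (hasDerivAt_J ⟨(hsub hx).1, by linarith [(hsub hx).2]⟩).continuousAt
  have hLc : ContinuousOn L (Icc h1 h2) := by
    apply continuousOn_of_forall_continuousAt
    intro x hx
    exact (hasDerivAt_L (hsub hx).1 (hsub hx).2).continuousAt
  obtain ⟨ξ, hξ, heq⟩ := exists_ratio_hasDerivAt_eq_ratio_slope J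
    (fun x => -(1 / (x * (1 - x) * Real.log 2))) h12 hJc
    (fun x hx => hasDerivAt_J ⟨(hsub (mem_Icc_of_Ioo hx)).1, by linarith [(hsub (mem_Icc_of_Ioo hx)).2]⟩)
    L (fun x => D2 x / (1 - 2*x)^2) hLc
    (fun x hx => hasDerivAt_L (hsub (mem_Icc_of_Ioo hx)).1 (hsub (mem_Icc_of_Ioo hx)).2)
  refine ⟨ξ, hξ, ?_⟩
  have hξm : ξ ∈ Ioo (0:ℝ) (1/2) := hsub (mem_Icc_of_Ioo hξ)
  have hL' : 0 < D2 ξ / (1 - 2*ξ)^2 :=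
    div_pos (D2_pos hξm.1 hξm.2) (by nlinarith [hξm.2])
  have hLlt : L h1 < L h2 := L_strictMonoOn ⟨le_of_lt hh1.1, hh1.2⟩
    ⟨le_of_lt hh2.1, hh2.2⟩ h12
  rw [div_eq_div_iff (by linarith) (ne_of_gt hL')]
  linarith [heq]

lemma gg_convexOn : ConvexOn ℝ (Ioi 0) gg := by
  rw [convexOn_iff_slope_mono_adjacent]
  refine ⟨convex_Ioi 0, ?_⟩
  intro t1 t2 t3 ht1 ht3 h12 h23
  have ht1' : (0:ℝ) < t1 := ht1
  have ht2' : (0:ℝ) < t2 := lt_trans ht1' h12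
  have ht3' : (0:ℝ) < t3 := ht3
  set h1 := Linv t1; set h2 := Linv t2; set h3 := Linv t3
  obtain ⟨hm1, hq1⟩ := Linv_spec (le_of_lt ht1')
  obtain ⟨hm2, hq2⟩ := Linv_spec (le_of_lt ht2')
  obtain ⟨hm3, hq3⟩ := Linv_spec (le_of_lt ht3')
  have hp1 : 0 < h1 := Linv_pos ht1'
  have hp2 : 0 < h2 := Linv_pos ht2'
  have hp3 : 0 < h3 := Linv_pos ht3'
  have hlt12 : h1 < h2 := by
    rcases eq_or_lt_of_le (Linv_mono (le_of_lt ht1') (le_of_lt h12)) with h|h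
    · exfalso
      have : L h1 = L h2 := by show L (Linv t1) = L (Linv t2); rw [h]
      rw [hq1, hq2] at this; linarith
    · exact h
  have hlt23 : h2 < h3 := by
    rcases eq_or_lt_of_le (Linv_mono (le_of_lt ht2') (le_of_lt h23)) with h|h
    · exfalso
      have : L h2 = L h3 := by show L (Linv t2) = L (Linv t3); rw [h]
      rw [hq2, hq3] at this; linarith
    · exact h
  have hm1' : h1 ∈ Ioo (0:ℝ) (1/2) := ⟨hp1, hm1.2⟩
  have hm2' : h2 ∈ Ioo (0:ℝ) (1/2) := ⟨hp2, hm2.2⟩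
  have hm3' : h3 ∈ Ioo (0:ℝ) (1/2) := ⟨hp3, hm3.2⟩
  obtain ⟨ξ, hξ, hs1⟩ := slope_JL hm1' hm2' hlt12
  obtain ⟨ζ, hζ, hs2⟩ := slope_JL hm2' hm3' hlt23
  have hξm : ξ ∈ Ioo (0:ℝ) (1/2) := ⟨lt_trans hp1 hξ.1, lt_trans hξ.2 hm2.2⟩
  have hζm : ζ ∈ Ioo (0:ℝ) (1/2) := ⟨lt_trans hp2 hζ.1, lt_trans hζ.2 hm3.2⟩
  have hr := ratio_mono hξm hζm (by linarith [hξ.2, hζ.1])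
  show (gg t2 - gg t1) / (t2 - t1) ≤ (gg t3 - gg t2) / (t3 - t2)
  have e1 : (gg t2 - gg t1) / (t2 - t1) = (J h2 - J h1) / (L h2 - L h1) := by
    rw [gg, gg, hq1, hq2]
  have e2 : (gg t3 - gg t2) / (t3 - t2) = (J h3 - J h2) / (L h3 - L h2) := by
    rw [gg, gg, hq2, hq3]
  rw [e1, e2, hs1, hs2]
  exact hr

/-! ### the perspective function FF -/

noncomputable def FF (y d : ℝ) : ℝ := |d| * J (Linv (2 * y / |d|))

lemma FF_abs (y d : ℝ) : FF y |d| = FF y d := by rw [FF, FF, abs_abs]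

lemma FF_zero (y : ℝ) : FF y 0 = 0 := by simp [FF]

lemma FF_eq_gg (y d : ℝ) : FF y d = |d| * gg (2 * y / |d|) := rfl

lemma FF_nonneg {y : ℝ} (hy : 0 < y) (d : ℝ) : 0 ≤ FF y d := by
  rcases eq_or_ne d 0 with h|h
  · rw [h, FF_zero]
  · exact mul_nonneg (abs_nonneg d) (gg_nonneg (by positivity))

lemma FF_mono {y d d' : ℝ} (hy : 0 < y) (hd : 0 ≤ d) (h : d ≤ d') : FF y d ≤ FF y d' := by
  rcases eq_or_lt_of_le hd with h0|h0
  · rw [← h0, FF_zero]; exact FF_nonneg hy d'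
  have hd' : 0 < d' := lt_of_lt_of_le h0 h
  rw [FF_eq_gg, FF_eq_gg, abs_of_pos h0, abs_of_pos hd']
  have harg : 2*y/d' ≤ 2*y/d := by
    apply div_le_div_of_nonneg_left (by positivity) h0 h
  have hgg : gg (2*y/d) ≤ gg (2*y/d') :=
    gg_antitoneOn (mem_Ioi.mpr (by positivity)) (mem_Ioi.mpr (by positivity)) harg
  calc d * gg (2*y/d) ≤ d * gg (2*y/d') :=
        mul_le_mul_of_nonneg_left hgg (le_of_lt h0)
  _ ≤ d' * gg (2*y/d') := mul_le_mul_of_nonneg_right h (gg_nonneg (by positivity))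

lemma FF_perspective {y1 y2 e1 e2 a b : ℝ} (hy1 : 0 < y1) (hy2 : 0 < y2)
    (he1 : 0 < e1) (he2 : 0 < e2) (ha : 0 < a) (hb : 0 < b) :
    (a*e1 + b*e2) * gg (2*(a*y1+b*y2)/(a*e1+b*e2)) ≤
      a * (e1 * gg (2*y1/e1)) + b * (e2 * gg (2*y2/e2)) := by
  set E := a*e1 + b*e2 with hE
  have hEpos : 0 < E := by positivity
  have hl1 : (0:ℝ) ≤ a*e1/E := by positivity
  have hl2 : (0:ℝ) ≤ b*e2/E := by positivity
  have hsum : a*e1/E + b*e2/E = 1 := by field_simp; exact hE.symm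
  have hcomb := gg_convexOn.2 (mem_Ioi.mpr (by positivity : (0:ℝ) < 2*y1/e1))
    (mem_Ioi.mpr (by positivity : (0:ℝ) < 2*y2/e2)) hl1 hl2 hsum
  have harg : (a*e1/E) • (2*y1/e1) + (b*e2/E) • (2*y2/e2) = 2*(a*y1+b*y2)/E := by
    have h1 : e1 ≠ 0 := ne_of_gt he1
    have h2 : e2 ≠ 0 := ne_of_gt he2
    have h3 : E ≠ 0 := ne_of_gt hEpos
    simp only [smul_eq_mul, div_eq_mul_inv]
    have k1 : e1 * e1⁻¹ = 1 := mul_inv_cancel₀ h1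
    have k2 : e2 * e2⁻¹ = 1 := mul_inv_cancel₀ h2
    linear_combination (a*E⁻¹*2*y1) * k1 + (b*E⁻¹*2*y2) * k2
  rw [harg] at hcomb
  have := mul_le_mul_of_nonneg_left hcomb (le_of_lt hEpos)
  calc E * gg (2*(a*y1+b*y2)/E) ≤ E * ((a*e1/E) • gg (2*y1/e1) + (b*e2/E) • gg (2*y2/e2)) := this
  _ = a * (e1 * gg (2*y1/e1)) + b * (e2 * gg (2*y2/e2)) := by
      simp only [smul_eq_mul]
      field_simp

lemma FF_convexOn : ConvexOn ℝ (Ioi 0 ×ˢ (univ : Set ℝ)) (fun q : ℝ × ℝ => FF q.1 q.2) := by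
  refine ⟨(convex_Ioi 0).prod convex_univ, ?_⟩
  rintro ⟨y1, d1⟩ hp ⟨y2, d2⟩ hq a b ha hb hab
  simp only [Prod.smul_mk, Prod.mk_add_mk, smul_eq_mul] at *
  have hy1 : 0 < y1 := (mem_prod.mp hp).1
  have hy2 : 0 < y2 := (mem_prod.mp hq).1
  rcases eq_or_lt_of_le ha with ha0|ha0
  · have hb1 : b = 1 := by linarith
    rw [← ha0, hb1]; simp
  rcases eq_or_lt_of_le hb with hb0|hb0
  · have ha1 : a = 1 := by linarith
    rw [← hb0, ha1]; simp
  have hybar : 0 < a*y1 + b*y2 := by positivity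
  rcases eq_or_ne d1 0 with hd1|hd1
  · rcases eq_or_ne d2 0 with hd2|hd2
    · rw [hd1, hd2]; simp [FF_zero]
    · rw [hd1]
      simp only [mul_zero, zero_add, FF_zero, mul_zero]
      rw [FF_eq_gg, FF_eq_gg, abs_mul, abs_of_pos hb0]
      have habs : 0 < |d2| := abs_pos.mpr hd2
      have harg : 2*y2/|d2| ≤ 2*(a*y1+b*y2)/(b*|d2|) := by
        rw [div_le_div_iff₀ (by positivity) (by positivity)]
        nlinarith [mul_pos ha0 hy1]
      have hgg := gg_antitoneOn (mem_Ioi.mpr (by positivity))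
        (mem_Ioi.mpr (by positivity)) harg
      calc b*|d2| * gg (2*(a*y1+b*y2)/(b*|d2|)) ≤ b*|d2| * gg (2*y2/|d2|) :=
            mul_le_mul_of_nonneg_left hgg (by positivity)
      _ = b * (|d2| * gg (2*y2/|d2|)) := by ring
  rcases eq_or_ne d2 0 with hd2|hd2
  · rw [hd2]
    simp only [mul_zero, add_zero, FF_zero, mul_zero]
    rw [FF_eq_gg, FF_eq_gg, abs_mul, abs_of_pos ha0]
    have habs : 0 < |d1| := abs_pos.mpr hd1
    have harg : 2*y1/|d1| ≤ 2*(a*y1+b*y2)/(a*|d1|) := by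
      rw [div_le_div_iff₀ (by positivity) (by positivity)]
      nlinarith [mul_pos hb0 hy2]
    have hgg := gg_antitoneOn (mem_Ioi.mpr (by positivity))
      (mem_Ioi.mpr (by positivity)) harg
    calc a*|d1| * gg (2*(a*y1+b*y2)/(a*|d1|)) ≤ a*|d1| * gg (2*y1/|d1|) :=
          mul_le_mul_of_nonneg_left hgg (by positivity)
    _ = a * (|d1| * gg (2*y1/|d1|)) := by ring
  -- main case
  have h1 : 0 < |d1| := abs_pos.mpr hd1
  have h2 : 0 < |d2| := abs_pos.mpr hd2
  have habs : |a*d1 + b*d2| ≤ a*|d1| + b*|d2| := by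
    calc |a*d1 + b*d2| ≤ |a*d1| + |b*d2| := abs_add_le _ _
    _ = a*|d1| + b*|d2| := by rw [abs_mul, abs_mul, abs_of_pos ha0, abs_of_pos hb0]
  calc FF (a*y1+b*y2) (a*d1+b*d2) = FF (a*y1+b*y2) |a*d1+b*d2| := (FF_abs _ _).symm
  _ ≤ FF (a*y1+b*y2) (a*|d1| + b*|d2|) := FF_mono hybar (abs_nonneg _) habs
  _ = (a*|d1| + b*|d2|) * gg (2*(a*y1+b*y2)/(a*|d1| + b*|d2|)) := by
      rw [FF_eq_gg, abs_of_pos (by positivity)]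
  _ ≤ a * (|d1| * gg (2*y1/|d1|)) + b * (|d2| * gg (2*y2/|d2|)) :=
      FF_perspective hy1 hy2 h1 h2 ha0 hb0
  _ = a * FF y1 d1 + b * FF y2 d2 := by rw [FF_eq_gg, FF_eq_gg]

/-! ### kappa lemmas -/

lemma kappa_symm (u w : ℝ) : kappa u w = kappa w u := by
  rcases eq_or_ne u w with h|h
  · rw [h]
  · rw [kappa, kappa, if_neg h, if_neg (Ne.symm h), abs_sub_comm w u, add_comm (H2 w)]
    ring

lemma kappa_flip {u w : ℝ} (hu : u ∈ Ioo (0:ℝ) 1) (hw : w ∈ Ioo (0:ℝ) 1) :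
    kappa (1 - u) (1 - w) = kappa u w := by
  rcases eq_or_ne u w with h|h
  · rw [h, kappa, kappa, if_pos rfl, if_pos rfl]
  · have h' : (1:ℝ) - u ≠ 1 - w := fun hc => h (by linarith)
    rw [kappa, kappa, if_neg h, if_neg h']
    rw [J_one_sub hu, J_one_sub hw, H2_symm, H2_symm]
    have habs : |1 - u - (1 - w)| = |u - w| := by
      rw [show (1:ℝ) - u - (1 - w) = -(u - w) by ring, abs_neg]
    rw [habs]
    ring

lemma kappa_min (hyp1 : ∀ u w : ℝ, u ∈ Set.Ioc (0 : ℝ) (1 / 2) → w ∈ Set.Ioc (0 : ℝ) (1 / 2) →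
      kappa u w ≤ kappa (1 - u) w)
    {u w : ℝ} (hu : u ∈ Ioo (0:ℝ) 1) (hw : w ∈ Ioo (0:ℝ) 1) :
    kappa (min u (1-u)) (min w (1-w)) ≤ kappa u w := by
  rcases le_or_gt u (1/2) with hu2|hu2 <;> rcases le_or_gt w (1/2) with hw2|hw2
  · rw [min_eq_left (by linarith), min_eq_left (by linarith)]
  · rw [min_eq_left (by linarith), min_eq_right (by linarith)]
    have h := hyp1 (1-w) u ⟨by linarith [hw.2], by linarith⟩ ⟨hu.1, hu2⟩
    rw [show (1:ℝ) - (1-w) = w by ring] at h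
    rw [kappa_symm, kappa_symm u w]
    exact h
  · rw [min_eq_right (by linarith), min_eq_left (by linarith)]
    have h := hyp1 (1-u) w ⟨by linarith [hu.2], by linarith⟩ ⟨hw.1, hw2⟩
    rw [show (1:ℝ) - (1-u) = u by ring] at h
    exact h
  · rw [min_eq_right (by linarith), min_eq_right (by linarith)]
    rw [kappa_flip hu hw]

lemma kappa_eq {u w : ℝ} : (u - w) * (J w - J u) / 2 = kappa u w + FF ((H2 u + H2 w)/2) (u - w) := by
  rcases eq_or_ne u w with h|h
  · rw [h, kappa, if_pos rfl, sub_self, FF_zero]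
    ring
  · rw [kappa, if_neg h, FF]
    have h2 : 2 * ((H2 u + H2 w)/2) / |u - w| = (H2 u + H2 w) / |u - w| := by ring_nf
    rw [h2]
    ring

/-! ### eta and phi -/

lemma eta_nonneg {y : ℝ} (hy : y ∈ Ioc (0:ℝ) 1) : 0 ≤ eta y := by
  obtain ⟨hm, _⟩ := H2inv_spec ⟨le_of_lt hy.1, hy.2⟩
  exact mul_nonneg (by linarith [hm.2]) (J_nonneg hm.1 hm.2)

lemma eta_eq_FF {y : ℝ} (hy : y ∈ Ioc (0:ℝ) 1) : eta y = FF y (1 - 2 * H2inv y) := by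
  obtain ⟨hm, hq⟩ := H2inv_spec ⟨le_of_lt hy.1, hy.2⟩
  set h := H2inv y with hdef
  rcases eq_or_lt_of_le hm.2 with he|he
  · rw [eta, FF, ← hdef, he]
    norm_num
  · have hd : (0:ℝ) < 1 - 2*h := by linarith
    rw [eta, FF, abs_of_pos hd]
    congr 2
    have hL : L h = 2 * y / (1 - 2*h) := by rw [L, hq]
    rw [← hL, Linv_L ⟨hm.1, he⟩]

lemma abs_le_one_sub_two_H2inv {a b y : ℝ} (ha : a ∈ Icc (0:ℝ) (1/2)) (hb : b ∈ Icc (0:ℝ) (1/2))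
    (hy : y = (H2 a + H2 b)/2) : |a - b| ≤ 1 - 2 * H2inv y := by
  have hmid : (a+b)/2 ∈ Icc (0:ℝ) (1/2) := ⟨by linarith [ha.1, hb.1], by linarith [ha.2, hb.2]⟩
  have hconc : (1/2 : ℝ) * H2 a + (1/2 : ℝ) * H2 b ≤ H2 ((1/2 : ℝ) * a + (1/2 : ℝ) * b) := by
    apply H2_concaveOn.2 ⟨ha.1, by linarith [ha.2]⟩ ⟨hb.1, by linarith [hb.2]⟩
      (by norm_num) (by norm_num) (by norm_num)
  have hy1 : y ≤ H2 ((a+b)/2) := by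
    rw [hy]
    calc (H2 a + H2 b)/2 = (1/2 : ℝ) * H2 a + (1/2 : ℝ) * H2 b := by ring
    _ ≤ H2 ((1/2 : ℝ) * a + (1/2 : ℝ) * b) := hconc
    _ = H2 ((a+b)/2) := by ring_nf
  have hy0 : 0 ≤ y := by
    rw [hy]
    rcases eq_or_lt_of_le ha.1 with h|h
    · rcases eq_or_lt_of_le hb.1 with h'|h'
      · rw [← h, ← h', H2_zero]; norm_num
      · have := H2_pos (x := b) ⟨h', by linarith [hb.2]⟩
        rw [← h, H2_zero]; linarith
    · have := H2_pos (x := a) ⟨h, by linarith [ha.2]⟩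
      rcases eq_or_lt_of_le hb.1 with h'|h'
      · rw [← h', H2_zero]; linarith
      · have := H2_pos (x := b) ⟨h', by linarith [hb.2]⟩; linarith
  have hinvle : H2inv y ≤ (a+b)/2 := by
    have h1 : H2inv y ≤ H2inv (H2 ((a+b)/2)) := by
      apply H2inv_le ⟨hy0, by rw [hy]; have := H2_le_one a; have := H2_le_one b; linarith⟩
        ⟨le_trans hy0 hy1, H2_le_one _⟩ hy1
    rwa [H2inv_H2 hmid] at h1
  rw [abs_le]
  constructor
  · linarith [ha.1, hb.2]
  · linarith [hb.1, ha.2]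

lemma H2inv_one' : H2inv 1 = 1/2 := H2inv_one

lemma eta_one : eta 1 = 0 := by
  rw [eta, H2inv_one']
  norm_num

lemma phi_formula {δ y : ℝ} (hδ : δ ∈ Ico (0:ℝ) 1) (hy : y ∈ Ioc (0:ℝ) 1) :
    phi ((1-δ)/2) y = max 0 (eta y - FF y δ) := by
  obtain ⟨hm, hq⟩ := H2inv_spec ⟨le_of_lt hy.1, hy.2⟩
  have hxm : (1-δ)/2 ∈ Icc (0:ℝ) (1/2) := ⟨by linarith [hδ.2], by linarith [hδ.1]⟩
  have hiff : H2 ((1-δ)/2) ≤ y ↔ 1 - 2 * H2inv y ≤ δ := by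
    constructor
    · intro h
      have := (H2_strictMonoOn.le_iff_le hxm hm).mp (by rw [hq]; exact h)
      linarith
    · intro h
      have hx2 : (1-δ)/2 ≤ H2inv y := by linarith
      have := (H2_strictMonoOn.le_iff_le hxm hm).mpr hx2
      rwa [hq] at this
  rcases le_or_gt (H2 ((1-δ)/2)) y with hcase|hcase
  · rw [phi, if_pos hcase]
    have hle : 1 - 2 * H2inv y ≤ δ := hiff.mp hcase
    have h0 : 0 ≤ 1 - 2 * H2inv y := by linarith [hm.2]
    have : eta y ≤ FF y δ := by
      rw [eta_eq_FF hy]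
      exact FF_mono hy.1 h0 hle
    rw [max_eq_left (by linarith)]
  · rw [phi, if_neg (not_le.mpr hcase)]
    have hgt : δ < 1 - 2 * H2inv y := by
      by_contra hc
      push_neg at hc
      exact absurd (hiff.mpr hc) (not_le.mpr hcase)
    have hFle : FF y δ ≤ eta y := by
      rw [eta_eq_FF hy]
      exact FF_mono hy.1 hδ.1 (le_of_lt hgt)
    rw [max_eq_right (by linarith)]
    rcases eq_or_lt_of_le hδ.1 with h0|h0
    · -- δ = 0 : x = 1/2, rPhi = 1
      have hx : (1-δ)/2 = 1/2 := by rw [← h0]; norm_num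
      rw [hx, rPhi, if_pos rfl, ← h0, FF_zero, eta_one]
      ring
    · -- δ > 0
      have hxne : (1-δ)/2 ≠ 1/2 := by
        intro hc
        have : δ = 0 := by linarith
        linarith
      have habsδ : |1 - 2*((1-δ)/2)| = δ := by
        rw [show (1:ℝ) - 2*((1-δ)/2) = δ by ring, abs_of_pos h0]
      -- existence of a solution r ∈ Ioo 0 1
      have hex : ∃ r ∈ Ioo (0:ℝ) 1, r / (1 - 2 * H2inv r) = y / δ := by
        have hty : (0:ℝ) < 2*y/δ := div_pos (by linarith [hy.1]) h0
        obtain ⟨hm0, hq0⟩ := Linv_spec (le_of_lt hty)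
        set h0' := Linv (2*y/δ) with hdef0
        have hp0 : 0 < h0' := Linv_pos hty
        have hr0 : H2 h0' ∈ Ioo (0:ℝ) 1 := by
          constructor
          · exact H2_pos ⟨hp0, by linarith [hm0.2]⟩
          · have := H2_strictMonoOn ⟨le_of_lt hp0, le_of_lt hm0.2⟩
              ⟨by norm_num, le_refl _⟩ hm0.2
            rwa [H2_half] at this
        refine ⟨H2 h0', hr0, ?_⟩
        rw [H2inv_H2 ⟨le_of_lt hp0, le_of_lt hm0.2⟩]
        have hne : (0:ℝ) < 1 - 2*h0' := by linarith [hm0.2]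
        rw [div_eq_div_iff (by linarith) (ne_of_gt h0)]
        have hLval : 2 * H2 h0' / (1 - 2*h0') = 2*y/δ := by rw [← L]; exact hq0
        rw [div_eq_div_iff (by linarith) (ne_of_gt h0)] at hLval
        linarith
      have hmem := Function.invFunOn_mem hex
      have heqr := Function.invFunOn_eq hex
      rw [rPhi, if_neg hxne, habsδ]
      set r := Function.invFunOn (fun r => r / (1 - 2 * H2inv r)) (Set.Ioo 0 1) (y / δ) with hrdef
      have hr01 : r ∈ Ioo (0:ℝ) 1 := hmem
      have hreq : r / (1 - 2 * H2inv r) = y / δ := heqr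
      obtain ⟨hm', hq'⟩ := H2inv_spec ⟨le_of_lt hr01.1, le_of_lt hr01.2⟩
      set h' := H2inv r with h'def
      have hyδ : 0 < y/δ := div_pos hy.1 h0
      have hden : 0 < 1 - 2*h' := by
        rcases lt_trichotomy (1 - 2*h') 0 with hc|hc|hc
        · exfalso
          have : r / (1 - 2*h') < 0 := div_neg_of_pos_of_neg hr01.1 hc
          rw [hreq] at this; linarith
        · exfalso
          rw [hc, div_zero] at hreq
          linarith
        · exact hc
      have hLh' : L h' = 2*y/δ := by
        rw [L, hq']
        rw [div_eq_div_iff (ne_of_gt hden) (ne_of_gt h0)] at hreq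
        rw [div_eq_div_iff (by linarith) (ne_of_gt h0)]
        linarith
      have hLinv : Linv (2*y/δ) = h' := by
        rw [← hLh', Linv_L ⟨hm'.1, by linarith⟩]
      have hetar : eta r = (1 - 2*h') * J h' := by rw [eta, ← h'def]
      have hfinal : (y / r) * eta r = FF y δ := by
        rw [hetar, FF, abs_of_pos h0, hLinv]
        have hrval : r = y * (1 - 2*h') / δ := by
          rw [div_eq_div_iff (ne_of_gt hden) (ne_of_gt h0)] at hreq
          field_simp
          linarith
        have hyne : y ≠ 0 := ne_of_gt hy.1
        have hδne : δ ≠ 0 := ne_of_gt h0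
        have hdne : (1:ℝ) - 2*h' ≠ 0 := ne_of_gt hden
        have hrne : r ≠ 0 := ne_of_gt hr01.1
        have hyr : y / r = δ / (1 - 2*h') := by
          rw [div_eq_div_iff hrne hdne, hrval]
          field_simp
        rw [hyr]
        field_simp
      rw [hfinal]

/-! ### nonemptiness of zetaSet -/

lemma H2_one : H2 1 = 0 := by
  have := H2_symm 0
  norm_num at this
  rw [this, H2_zero]

lemma exists_pair {m e : ℝ} (hm : m ∈ Ioo (0:ℝ) 1) (he : e ∈ Ioc 0 (H2 m)) :
    ∃ q v1 v2 : ℝ, 0 ≤ q ∧ q ≤ 1 ∧ v1 ∈ Ioo (0:ℝ) 1 ∧ v2 ∈ Ioo (0:ℝ) 1 ∧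
      q*v1 + (1-q)*v2 = m ∧ q*(H2 v1) + (1-q)*(H2 v2) = e := by
  set E : ℝ → ℝ := fun s => (1-m)*H2 (m*(1-s)) + m*H2 (m+(1-m)*s) with hE
  have hcont : Continuous E := by
    apply Continuous.add
    · exact continuous_const.mul (H2_continuous.comp (by continuity))
    · exact continuous_const.mul (H2_continuous.comp (by continuity))
  have hE1 : E 1 = 0 := by
    show (1-m)*H2 (m*(1-1)) + m*H2 (m+(1-m)*1) = 0
    rw [show m*((1:ℝ)-1) = 0 by ring, show m+(1-m)*1 = (1:ℝ) by ring, H2_zero, H2_one]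
    ring
  have hE0 : E 0 = H2 m := by
    show (1-m)*H2 (m*(1-0)) + m*H2 (m+(1-m)*0) = H2 m
    rw [show m*((1:ℝ)-0) = m by ring, show m+(1-m)*0 = m by ring]
    ring
  have hIVT := intermediate_value_Icc' (by norm_num : (0:ℝ) ≤ 1) hcont.continuousOn
  rw [hE1, hE0] at hIVT
  obtain ⟨s, hs, hEs⟩ := hIVT ⟨le_of_lt he.1, he.2⟩
  have hs1 : s < 1 := by
    rcases eq_or_lt_of_le hs.2 with h|h
    · exfalso
      rw [h, hE1] at hEs
      exact absurd hEs.symm (ne_of_gt he.1)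
    · exact h
  refine ⟨1-m, m*(1-s), m+(1-m)*s, by linarith [hm.2], by linarith [hm.1], ?_, ?_, by ring, ?_⟩
  · constructor
    · have : 0 < 1 - s := by linarith
      exact mul_pos hm.1 this
    · nlinarith [hm.1, hm.2, hs.1]
  · constructor
    · have : 0 ≤ (1-m)*s := mul_nonneg (by linarith [hm.2]) hs.1
      linarith [hm.1]
    · nlinarith [hm.2]
  · rw [show (1:ℝ) - (1-m) = m by ring]
    exact hEs

lemma zetaSet_nonempty {mu mw eu ew : ℝ} (hmu : mu ∈ Ioo (0:ℝ) 1) (hmw : mw ∈ Ioo (0:ℝ) 1)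
    (heu : eu ∈ Ioc (0:ℝ) (H2 mu)) (hew : ew ∈ Ioc (0:ℝ) (H2 mw)) :
    (zetaSet mu mw eu ew).Nonempty := by
  obtain ⟨qu, a1, a2, hqu0, hqu1, ha1, ha2, hmua, heua⟩ := exists_pair hmu heu
  obtain ⟨qw, b1, b2, hqw0, hqw1, hb1, hb2, hmwb, hewb⟩ := exists_pair hmw hew
  set pu : Fin 2 → ℝ := ![qu, 1-qu] with hpu
  set pw : Fin 2 → ℝ := ![qw, 1-qw] with hpw
  set vu : Fin 2 → ℝ := ![a1, a2] with hvu
  set vw : Fin 2 → ℝ := ![b1, b2] with hvw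
  set p : Fin 2 × Fin 2 → ℝ := fun x => pu x.1 * pw x.2 with hp
  set u : Fin 2 × Fin 2 → ℝ := fun x => vu x.1 with hu
  set w : Fin 2 × Fin 2 → ℝ := fun x => vw x.2 with hw
  refine ⟨_, Fin 2 × Fin 2, inferInstance, p, u, w, ?_, ?_, ?_, ?_, ?_, ?_, ?_, ?_, rfl⟩
  · rintro ⟨i, j⟩
    apply mul_nonneg
    · fin_cases i <;> simp [hpu] <;> linarith
    · fin_cases j <;> simp [hpw] <;> linarith
  · rw [Fintype.sum_prod_type]
    simp [hp, hpu, hpw, Fin.sum_univ_two]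
    ring
  · rintro ⟨i, j⟩
    fin_cases i <;> simpa [hu, hvu] using (by assumption)
  · rintro ⟨i, j⟩
    fin_cases j <;> simpa [hw, hvw] using (by assumption)
  · rw [Fintype.sum_prod_type]
    simp only [hp, hpu, hpw, hu, hvu, Fin.sum_univ_two, Matrix.cons_val_zero, Matrix.cons_val_one,
      Matrix.head_cons]
    nlinarith [hmua]
  · rw [Fintype.sum_prod_type]
    simp only [hp, hpu, hpw, hw, hvw, Fin.sum_univ_two, Matrix.cons_val_zero, Matrix.cons_val_one,
      Matrix.head_cons]
    nlinarith [hmwb]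
  · rw [Fintype.sum_prod_type]
    simp only [hp, hpu, hpw, hu, hvu, Fin.sum_univ_two, Matrix.cons_val_zero, Matrix.cons_val_one,
      Matrix.head_cons]
    nlinarith [heua]
  · rw [Fintype.sum_prod_type]
    simp only [hp, hpu, hpw, hw, hvw, Fin.sum_univ_two, Matrix.cons_val_zero, Matrix.cons_val_one,
      Matrix.head_cons]
    nlinarith [hewb]

lemma H2inv_H2_min {v : ℝ} (hv : v ∈ Ioo (0:ℝ) 1) : H2inv (H2 v) = min v (1-v) := by
  rcases le_or_gt v (1/2) with h|h
  · rw [min_eq_left (by linarith), H2inv_H2 ⟨le_of_lt hv.1, h⟩]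
  · rw [min_eq_right (by linarith), ← H2_symm v, H2inv_H2 ⟨by linarith [hv.2], by linarith⟩]

theorem stmt19
    (hyp1 : ∀ u w : ℝ, u ∈ Set.Ioc (0 : ℝ) (1 / 2) → w ∈ Set.Ioc (0 : ℝ) (1 / 2) →
      kappa u w ≤ kappa (1 - u) w)
    (hyp2 : ConvexOn ℝ (Set.Ioc (0 : ℝ) 1 ×ˢ Set.Ioc (0 : ℝ) 1)
      (fun q : ℝ × ℝ => kappa (H2inv q.1) (H2inv q.2)))
    (mu mw eu ew : ℝ) (hmu : mu ∈ Set.Ioo (0 : ℝ) 1) (hmw : mw ∈ Set.Ioo (0 : ℝ) 1)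
    (heu : eu ∈ Set.Ioc (0 : ℝ) (H2 mu)) (hew : ew ∈ Set.Ioc (0 : ℝ) (H2 mw)) :
    zeta mu mw eu ew ≥
      phi ((1 - |H2inv eu - H2inv ew|) / 2) ((eu + ew) / 2) +
        (H2inv eu - H2inv ew) * (J (H2inv ew) - J (H2inv eu)) / 2 -
        phi ((1 - |mu - mw|) / 2) ((eu + ew) / 2) := by
  have heuI : eu ∈ Ioc (0:ℝ) 1 := ⟨heu.1, le_trans heu.2 (H2_le_one mu)⟩
  have hewI : ew ∈ Ioc (0:ℝ) 1 := ⟨hew.1, le_trans hew.2 (H2_le_one mw)⟩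
  set y := (eu + ew)/2 with hydef
  have hy : y ∈ Ioc (0:ℝ) 1 := ⟨by rw [hydef]; linarith [heuI.1, hewI.1],
    by rw [hydef]; linarith [heuI.2, hewI.2]⟩
  obtain ⟨ham, haq⟩ := H2inv_spec ⟨le_of_lt heuI.1, heuI.2⟩
  obtain ⟨hbm, hbq⟩ := H2inv_spec ⟨le_of_lt hewI.1, hewI.2⟩
  set a := H2inv eu with hadef
  set b := H2inv ew with hbdef
  set Δ := (a - b) * (J b - J a) / 2 with hΔdef
  -- phi formulas
  have hab1 : |a - b| ∈ Ico (0:ℝ) 1 := ⟨abs_nonneg _, by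
    rw [abs_lt]; constructor <;> [linarith [ham.1, hbm.2]; linarith [ham.2, hbm.1]]⟩
  have habH : |a - b| ≤ 1 - 2 * H2inv y :=
    abs_le_one_sub_two_H2inv ham hbm (by rw [hydef, haq, hbq])
  have hFab_le : FF y (a - b) ≤ eta y := by
    rw [eta_eq_FF hy, ← FF_abs y (a-b)]
    exact FF_mono hy.1 (abs_nonneg _) habH
  have hphi1 : phi ((1 - |a - b|)/2) y = eta y - FF y (a - b) := by
    rw [phi_formula hab1 hy, FF_abs, max_eq_right (by linarith)]
  have hmm1 : |mu - mw| ∈ Ico (0:ℝ) 1 := ⟨abs_nonneg _, by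
    rw [abs_lt]; constructor <;> [linarith [hmu.1, hmw.2]; linarith [hmu.2, hmw.1]]⟩
  have hphi2 : phi ((1 - |mu - mw|)/2) y = max 0 (eta y - FF y (mu - mw)) := by
    rw [phi_formula hmm1 hy, FF_abs]
  -- value of kappa a b
  have hkab : kappa a b = Δ - FF y (a - b) := by
    have h := kappa_eq (u := a) (w := b)
    rw [haq, hbq] at h
    rw [hΔdef]
    linarith [h]
  -- the lower bound for every element of zetaSet
  have hlb : ∀ c ∈ zetaSet mu mw eu ew,
      phi ((1 - |a - b|)/2) y + Δ - phi ((1 - |mu - mw|)/2) y ≤ c := by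
    rintro c ⟨X, inst, p, u, w, hp0, hp1, hu, hw, hmu', hmw', heu', hew', hc⟩
    -- split c
    have hsplit : c = (∑ x, p x * kappa (u x) (w x)) +
        (∑ x, p x * FF ((H2 (u x) + H2 (w x))/2) (u x - w x)) := by
      rw [hc, Finset.mul_sum, ← Finset.sum_add_distrib]
      apply Finset.sum_congr rfl
      intro x _
      have := kappa_eq (u := u x) (w := w x)
      linear_combination p x * this
    -- kappa pointwise symmetrization
    have hk1 : ∀ x, p x * kappa (H2inv (H2 (u x))) (H2inv (H2 (w x))) ≤ p x * kappa (u x) (w x) := by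
      intro x
      apply mul_le_mul_of_nonneg_left _ (hp0 x)
      rw [H2inv_H2_min (hu x), H2inv_H2_min (hw x)]
      exact kappa_min hyp1 (hu x) (hw x)
    -- Jensen for kappa via hyp2
    have hsum_pos : (0:ℝ) < ∑ x, p x := by rw [hp1]; norm_num
    have hk2 : kappa a b ≤ ∑ x, p x * kappa (H2inv (H2 (u x))) (H2inv (H2 (w x))) := by
      have hmem : ∀ x ∈ Finset.univ (α := X),
          (H2 (u x), H2 (w x)) ∈ Set.Ioc (0:ℝ) 1 ×ˢ Set.Ioc (0:ℝ) 1 := by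
        intro x _
        exact ⟨⟨H2_pos (hu x), H2_le_one _⟩, ⟨H2_pos (hw x), H2_le_one _⟩⟩
      have := hyp2.map_centerMass_le (fun x _ => hp0 x) hsum_pos hmem
      rw [Finset.centerMass_eq_of_sum_1 _ _ hp1] at this
      have hcm : (∑ x, p x • (H2 (u x), H2 (w x))) = ((eu : ℝ), (ew : ℝ)) := by
        apply Prod.ext
        · rw [Prod.fst_sum]
          simp only [Prod.smul_mk, smul_eq_mul]
          exact heu'
        · rw [Prod.snd_sum]
          simp only [Prod.smul_mk, smul_eq_mul]
          exact hew'
      rw [hcm] at this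
      calc kappa a b = kappa (H2inv eu) (H2inv ew) := by rw [← hadef, ← hbdef]
      _ ≤ _ := this
      _ = ∑ x, p x * kappa (H2inv (H2 (u x))) (H2inv (H2 (w x))) := by
          rw [Finset.centerMass_eq_of_sum_1 _ _ hp1]
          simp only [Function.comp, smul_eq_mul]
    -- Jensen for FF
    have hFF : FF y (mu - mw) ≤ ∑ x, p x * FF ((H2 (u x) + H2 (w x))/2) (u x - w x) := by
      have hmem : ∀ x ∈ Finset.univ (α := X),
          ((H2 (u x) + H2 (w x))/2, u x - w x) ∈ Set.Ioi (0:ℝ) ×ˢ (univ : Set ℝ) := by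
        intro x _
        refine ⟨?_, trivial⟩
        have h1 := H2_pos (hu x)
        have h2 := H2_pos (hw x)
        show (0:ℝ) < (H2 (u x) + H2 (w x))/2
        linarith
      have := FF_convexOn.map_centerMass_le (fun x _ => hp0 x) hsum_pos hmem
      rw [Finset.centerMass_eq_of_sum_1 _ _ hp1] at this
      have hcm : (∑ x, p x • ((H2 (u x) + H2 (w x))/2, u x - w x)) = (y, mu - mw) := by
        apply Prod.ext
        · rw [Prod.fst_sum]
          simp only [Prod.smul_mk, smul_eq_mul]
          rw [hydef, ← heu', ← hew']
          rw [← Finset.sum_add_distrib, Finset.sum_div]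
          apply Finset.sum_congr rfl
          intro x _
          ring
        · rw [Prod.snd_sum]
          simp only [Prod.smul_mk, smul_eq_mul]
          rw [← hmu', ← hmw', ← Finset.sum_sub_distrib]
          apply Finset.sum_congr rfl
          intro x _
          ring
      rw [hcm] at this
      calc FF y (mu - mw) ≤ _ := this
      _ = ∑ x, p x * FF ((H2 (u x) + H2 (w x))/2) (u x - w x) := by
          rw [Finset.centerMass_eq_of_sum_1 _ _ hp1]
          simp only [Function.comp, smul_eq_mul]
    -- combine
    have hchain : Δ - FF y (a - b) + FF y (mu - mw) ≤ c := by
      rw [hsplit, ← hkab]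
      have t1 : kappa a b ≤ ∑ x, p x * kappa (u x) (w x) :=
        le_trans hk2 (Finset.sum_le_sum (fun x _ => hk1 x))
      linarith [hFF, t1]
    rw [hphi1, hphi2]
    rcases le_total (eta y - FF y (mu - mw)) 0 with h|h
    · rw [max_eq_left h]
      linarith
    · rw [max_eq_right h]
      linarith
  -- conclude via sInf
  have hne := zetaSet_nonempty hmu hmw heu hew
  exact le_csInf hne hlb
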